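/- Let (V_1,...,V_n) be an n-tuple of doubly non-commuting isometries on a complex Hilbert space H, let i_1,...,i_l be l distinct indices in {1,...,n}, and let k_{i_1},...,k_{i_l} ≥ 0. Then: (1) the product (V_{i_1}^{k_{i_1}}(1 − V_{i_1}V_{i_1}*)V_{i_1}^{*k_{i_1}}) ⋯ (V_{i_l}^{k_{i_l}}(1 − V_{i_l}V_{i_l}*)V_{i_l}^{*k_{i_l}}) equals (V_{i_1}^{k_{i_1}} ⋯ V_{i_l}^{k_{i_l}}) · [(1 − V_{i_1}V_{i_1}*) ⋯ (1 − V_{i_l}V_{i_l}*)] · (V_{i_l}^{*k_{i_l}} ⋯ V_{i_1}^{*k_{i_1}}); and (2) (V_{i_1}^{k_{i_1}}V_{i_1}^{*k_{i_1}}) ⋯ (V_{i_l}^{k_{i_l}}V_{i_l}^{*k_{i_l}}) = (V_{i_1}^{k_{i_1}} ⋯ V_{i_l}^{k_{i_l}}) · (V_{i_l}^{*k_{i_l}} ⋯ V_{i_1}^{*k_{i_1}}). -/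

import Mathlib

open ContinuousLinearMap

variable {H : Type*} [NormedAddCommGroup H] [InnerProductSpace ℂ H] [CompleteSpace H]

section Aux
variable {R : Type*} [Ring R] [Algebra ℂ R]

theorem spow' {A B : R} {s : ℂ} (h : A * B = s • (B * A)) (b : ℕ) :
    A * B ^ b = s ^ b • (B ^ b * A) := by
  induction b with
  | zero => simp
  | succ b ih =>
      rw [pow_succ, ← mul_assoc, ih, smul_mul_assoc, mul_assoc, h, mul_smul_comm, smul_smul,
        pow_succ, mul_assoc]

theorem commE' {A B D : R} {s t : ℂ} (hst : s * t = 1) (hB : A * B = s • (B * A))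
    (hD : A * D = t • (D * A)) : A * (B * D) = (B * D) * A := by
  rw [← mul_assoc, hB, smul_mul_assoc, mul_assoc, hD, mul_smul_comm, smul_smul, hst, one_smul,
    mul_assoc]

theorem comm3' {A B C D : R} {s t : ℂ} (hst : s * t = 1) (hB : A * B = s • (B * A))
    (hC : A * C = C * A) (hD : A * D = t • (D * A)) (b : ℕ) :
    A * (B ^ b * C * D ^ b) = (B ^ b * C * D ^ b) * A := by
  have hD' := spow' hD b
  have h2 : A * (C * D ^ b) = t ^ b • ((C * D ^ b) * A) := by
    rw [← mul_assoc, hC, mul_assoc, hD', mul_smul_comm, mul_assoc]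
  have h3 := commE' (by rw [← mul_pow, hst, one_pow]) (spow' hB b) h2
  simpa [mul_assoc] using h3

theorem assemble1 {M : Type*} [Monoid M] {v p w a q b : M} (h1 : Commute w (a * q * b))
    (h2 : Commute p a) : v * p * w * (a * q * b) = v * a * (p * q) * (b * w) := by
  calc v * p * w * (a * q * b) = v * p * (w * (a * q * b)) := by rw [mul_assoc]
    _ = v * p * ((a * q * b) * w) := by rw [h1.eq]
    _ = v * (p * a) * (q * (b * w)) := by simp only [mul_assoc]
    _ = v * (a * p) * (q * (b * w)) := by rw [h2.eq]
    _ = v * a * (p * q) * (b * w) := by simp only [mul_assoc]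

theorem assemble2 {M : Type*} [Monoid M] {v w a b : M} (h1 : Commute w (a * b)) :
    v * w * (a * b) = v * a * (b * w) := by
  calc v * w * (a * b) = v * ((a * b) * w) := by rw [mul_assoc, h1.eq]
    _ = v * a * (b * w) := by simp only [mul_assoc]

theorem Commute.of_eq' {M : Type*} [Mul M] {a b : M} (h : a * b = b * a) : Commute a b := h

end Aux

/-- `(V 1, ..., V n)` is an `n`-tuple of doubly non-commuting isometries with structure
constants `z i j`: each `V i` is an isometry (`(V i)* (V i) = 1`) and
`(V i)* (V j) = conj (z i j) • (V j) (V i)*` for all `i ≠ j`. -/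
def DoublyNonCommuting {n : ℕ} (z : Fin n → Fin n → ℂ) (V : Fin n → H →L[ℂ] H) : Prop :=
  (∀ i, adjoint (V i) * V i = 1) ∧
    ∀ i j, i ≠ j →
      adjoint (V i) * V j = (starRingEnd ℂ) (z i j) • (V j * adjoint (V i))

set_option maxHeartbeats 1000000

theorem statement10 {n : ℕ} (hn : 1 ≤ n) (z : Fin n → Fin n → ℂ)
    (hz1 : ∀ i j, i ≠ j → ‖z i j‖ = 1)
    (hz2 : ∀ i j, i ≠ j → z j i = (starRingEnd ℂ) (z i j))
    (V : Fin n → H →L[ℂ] H) (hV : DoublyNonCommuting z V)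
    (l : ℕ) (ι : Fin l → Fin n) (hι : Function.Injective ι) (k : Fin l → ℕ) :
    (List.ofFn fun r =>
        V (ι r) ^ k r * (1 - V (ι r) * adjoint (V (ι r))) * adjoint (V (ι r)) ^ k r).prod =
      (List.ofFn fun r => V (ι r) ^ k r).prod *
        (List.ofFn fun r => 1 - V (ι r) * adjoint (V (ι r))).prod *
        ((List.ofFn fun r => adjoint (V (ι r)) ^ k r).reverse).prod ∧
    (List.ofFn fun r => V (ι r) ^ k r * adjoint (V (ι r)) ^ k r).prod =
      (List.ofFn fun r => V (ι r) ^ k r).prod *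
        ((List.ofFn fun r => adjoint (V (ι r)) ^ k r).reverse).prod := by
  have hz : ∀ i j, i ≠ j → z i j * (starRingEnd ℂ) (z i j) = 1 := by
    intro i j h
    rw [Complex.mul_conj, Complex.normSq_eq_norm_sq, hz1 i j h]
    norm_num
  have hz' : ∀ i j, i ≠ j → (starRingEnd ℂ) (z i j) * z i j = 1 := by
    intro i j h; rw [mul_comm]; exact hz i j h
  have cc : ∀ i j, i ≠ j → (starRingEnd ℂ) (z j i) = z i j := by
    intro i j h
    rw [hz2 i j h]
    simp
  have hiso := hV.1
  have s2 := hV.2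
  have s2' : ∀ i j, i ≠ j → adjoint (V j) * V i = z i j • (V i * adjoint (V j)) := by
    intro i j hij
    have h := hV.2 j i hij.symm
    rwa [cc i j hij] at h
  have s3 : ∀ i j, i ≠ j → V i * adjoint (V j) = (starRingEnd ℂ) (z i j) • (adjoint (V j) * V i) := by
    intro i j hij
    rw [s2' i j hij, smul_smul, hz' i j hij, one_smul]
  have s1 : ∀ i j, i ≠ j → V i * V j = z i j • (V j * V i) := by
    intro i j hij
    have e1 : (adjoint (V j) * adjoint (V i)) * (V i * V j) = 1 := by
      rw [mul_assoc, ← mul_assoc (adjoint (V i)), hiso i, one_mul, hiso j]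
    have e4 : (adjoint (V i) * adjoint (V j)) * (V j * V i) = 1 := by
      rw [mul_assoc, ← mul_assoc (adjoint (V j)), hiso j, one_mul, hiso i]
    have e2 : (adjoint (V j) * adjoint (V i)) * (V j * V i)
        = (starRingEnd ℂ) (z i j) • (1 : H →L[ℂ] H) := by
      rw [mul_assoc, ← mul_assoc (adjoint (V i)), s2 i j hij, smul_mul_assoc, mul_smul_comm,
        mul_assoc (V j) (adjoint (V i)) (V i), hiso i, mul_one, hiso j]
    have e3 : (adjoint (V i) * adjoint (V j)) * (V i * V j) = z i j • (1 : H →L[ℂ] H) := by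
      rw [mul_assoc, ← mul_assoc (adjoint (V j)), s2' i j hij, smul_mul_assoc, mul_smul_comm,
        mul_assoc (V i) (adjoint (V j)) (V j), hiso j, mul_one, hiso i]
    set X : H →L[ℂ] H := V i * V j - z i j • (V j * V i) with hXdef
    have hadj : adjoint X = (adjoint (V j) * adjoint (V i))
        - (starRingEnd ℂ) (z i j) • (adjoint (V i) * adjoint (V j)) := by
      simp [hXdef, ← star_eq_adjoint, star_sub, star_smul, star_mul, Complex.star_def]
    have hXX : adjoint X * X = 0 := by
      rw [hadj, hXdef]
      simp only [sub_mul, mul_sub, smul_mul_assoc, mul_smul_comm, smul_smul, e1, e2, e3, e4]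
      rw [hz' i j hij]
      simp
    have hX0 : X = 0 := by
      have h0 : ‖X‖ * ‖X‖ = 0 := by
        rw [← norm_adjoint_comp_self, show (adjoint X).comp X = 0 from hXX, norm_zero]
      simpa [mul_self_eq_zero] using h0
    exact sub_eq_zero.mp hX0
  have s4 : ∀ i j, i ≠ j → adjoint (V i) * adjoint (V j) = z i j • (adjoint (V j) * adjoint (V i)) := by
    intro i j hij
    have h := congrArg star (s1 j i hij.symm)
    simp only [star_mul, star_smul, star_eq_adjoint, Complex.star_def, cc i j hij] at h
    exact h
  clear hn
  induction l with
  | zero => simp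
  | succ l IH =>
    have hι' : Function.Injective (fun r : Fin l => ι r.succ) :=
      fun a b hab => Fin.succ_injective _ (hι hab)
    obtain ⟨IH1, IH2⟩ := IH (fun r => ι r.succ) hι' (fun r => k r.succ)
    have hne : ∀ r : Fin l, ι 0 ≠ ι r.succ := fun r h => Fin.succ_ne_zero r (hι h.symm)
    constructor
    · have hcT : Commute (adjoint (V (ι 0)) ^ k 0)
          (List.ofFn fun r : Fin l =>
            V (ι r.succ) ^ k r.succ * (1 - V (ι r.succ) * adjoint (V (ι r.succ))) *
              adjoint (V (ι r.succ)) ^ k r.succ).prod := by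
        apply Commute.list_prod_right
        intro x hx
        rw [List.mem_ofFn] at hx
        obtain ⟨r, rfl⟩ := hx
        have hij := hne r
        have hEc : adjoint (V (ι 0)) * (V (ι r.succ) * adjoint (V (ι r.succ)))
            = (V (ι r.succ) * adjoint (V (ι r.succ))) * adjoint (V (ι 0)) :=
          commE' (hz' _ _ hij) (s2 _ _ hij) (s4 _ _ hij)
        have hC : adjoint (V (ι 0)) * (1 - V (ι r.succ) * adjoint (V (ι r.succ)))
            = (1 - V (ι r.succ) * adjoint (V (ι r.succ))) * adjoint (V (ι 0)) :=
          ((Commute.one_right (adjoint (V (ι 0)))).sub_right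
            (Commute.of_eq' hEc)).eq
        have h := comm3' (hz' _ _ hij) (s2 _ _ hij) hC (s4 _ _ hij) (k r.succ)
        exact (Commute.of_eq' h).pow_left (k 0)
      have hPA : Commute (1 - V (ι 0) * adjoint (V (ι 0)))
          (List.ofFn fun r : Fin l => V (ι r.succ) ^ k r.succ).prod := by
        apply Commute.list_prod_right
        intro x hx
        rw [List.mem_ofFn] at hx
        obtain ⟨r, rfl⟩ := hx
        have hij := (hne r).symm
        have hEV : Commute (V (ι r.succ)) (V (ι 0) * adjoint (V (ι 0))) :=
          Commute.of_eq' <| commE' (hz _ _ hij) (s1 _ _ hij) (s3 _ _ hij)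
        exact ((Commute.one_left (V (ι r.succ))).sub_left hEV.symm).pow_right (k r.succ)
      simp only [List.ofFn_succ, List.prod_cons, List.reverse_cons, List.prod_append,
        List.prod_cons, List.prod_nil, mul_one]
      rw [IH1] at hcT ⊢
      exact assemble1 hcT hPA
    · have hcE : Commute (adjoint (V (ι 0)) ^ k 0)
          (List.ofFn fun r : Fin l =>
            V (ι r.succ) ^ k r.succ * adjoint (V (ι r.succ)) ^ k r.succ).prod := by
        apply Commute.list_prod_right
        intro x hx
        rw [List.mem_ofFn] at hx
        obtain ⟨r, rfl⟩ := hx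
        have hij := hne r
        have h := comm3' (hz' _ _ hij) (s2 _ _ hij) ((Commute.one_right (adjoint (V (ι 0)))).eq)
          (s4 _ _ hij) (k r.succ)
        have h' : adjoint (V (ι 0)) * (V (ι r.succ) ^ k r.succ * adjoint (V (ι r.succ)) ^ k r.succ)
            = (V (ι r.succ) ^ k r.succ * adjoint (V (ι r.succ)) ^ k r.succ) * adjoint (V (ι 0)) := by
          simpa using h
        exact (Commute.of_eq' h').pow_left (k 0)
      simp only [List.ofFn_succ, List.prod_cons, List.reverse_cons, List.prod_append,
        List.prod_cons, List.prod_nil, mul_one]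
      rw [IH2] at hcE ⊢
      exact assemble2 hcE
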